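/- Let α > 1, β > −α, 0 < ε ≤ 1, and let h : (0,1] → ℝ be positive, monotone increasing, with h(x) ≤ x^α for all x ∈ (0,1]. Then for every s > 0 and every y ∈ (0,ε): ∫_y^ε x^β · exp(−s ∫_y^x dt/h(t)) dx ≤ ε^{α+β}/s. -/

import Mathlib

open MeasureTheory Set Real

/-- Column-sum bound in the Schur test of Lemma 3.2:
`∫_y^ε x^β exp(−s ∫_y^x dt/h(t)) dx ≤ ε^{α+β}/s` for `s > 0`. -/
theorem stmt_6 (α β ε : ℝ) (hα : 1 < α) (hβ : -α < β) (hε : 0 < ε) (hε1 : ε ≤ 1)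
    (h : ℝ → ℝ)
    (hpos : ∀ x ∈ Ioc (0:ℝ) 1, 0 < h x)
    (hmono : ∀ x ∈ Ioc (0:ℝ) 1, ∀ y ∈ Ioc (0:ℝ) 1, x ≤ y → h x ≤ h y)
    (hbound : ∀ x ∈ Ioc (0:ℝ) 1, h x ≤ x ^ α)
    (s : ℝ) (hs : 0 < s) (y : ℝ) (hy : y ∈ Ioo 0 ε) :
    ∫ x in y..ε, x ^ β * Real.exp (-(s * ∫ t in y..x, 1 / h t)) ≤
      ε ^ (α + β) / s := by
  obtain ⟨hy0, hyε⟩ := hy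
  have hyle : y ≤ ε := hyε.le
  have huIcc : uIcc y ε = Icc y ε := uIcc_of_le hyle
  have hsub : Icc y ε ⊆ Ioc 0 1 := fun t ht => ⟨lt_of_lt_of_le hy0 ht.1, ht.2.trans hε1⟩
  -- integrability of 1/h on [y, ε]
  have hanti : AntitoneOn (fun t => 1 / h t) (uIcc y ε) := by
    rw [huIcc]
    intro u hu v hv huv
    exact one_div_le_one_div_of_le (hpos u (hsub hu)) (hmono u (hsub hu) v (hsub hv) huv)
  have hint_h : IntervalIntegrable (fun t => 1 / h t) volume y ε := hanti.intervalIntegrable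
  -- the power function
  have hcontpow : ContinuousOn (fun t : ℝ => t ^ (-α)) (Icc y ε) := fun t ht =>
    (Real.continuousAt_rpow_const t (-α) (Or.inl (hsub ht).1.ne')).continuousWithinAt
  have hintpow : IntervalIntegrable (fun t : ℝ => t ^ (-α)) volume y ε := by
    apply ContinuousOn.intervalIntegrable; rwa [huIcc]
  set G : ℝ → ℝ := fun x => ∫ t in y..x, t ^ (-α) with hG
  set F : ℝ → ℝ := fun x => ∫ t in y..x, 1 / h t with hF
  -- pointwise bound on integrands
  have hptw : ∀ t ∈ Icc y ε, t ^ (-α) ≤ 1 / h t := by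
    intro t ht
    have ht01 := hsub ht
    rw [Real.rpow_neg ht01.1.le, ← one_div]
    exact one_div_le_one_div_of_le (hpos t ht01) (hbound t ht01)
  -- G ≤ F on [y, ε]
  have hFG : ∀ x ∈ Icc y ε, G x ≤ F x := by
    intro x hx
    have hsub' : uIcc y x ⊆ uIcc y ε := by
      rw [huIcc, uIcc_of_le hx.1]
      exact Icc_subset_Icc le_rfl hx.2
    refine intervalIntegral.integral_mono_on hx.1 (hintpow.mono_set hsub')
      (hint_h.mono_set hsub') ?_
    intro t ht
    exact hptw t ⟨ht.1, ht.2.trans hx.2⟩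
  -- derivative of G
  have hderivG : ∀ x ∈ Icc y ε, HasDerivAt G (x ^ (-α)) x := by
    intro x hx
    have hx0 : (0:ℝ) < x := (hsub hx).1
    have hcpos : ContinuousOn (fun t : ℝ => t ^ (-α)) (Ioi 0) := fun t ht =>
      (Real.continuousAt_rpow_const t (-α) (Or.inl (ne_of_gt ht))).continuousWithinAt
    refine intervalIntegral.integral_hasDerivAt_right
      (hintpow.mono_set ?_) (hcpos.stronglyMeasurableAtFilter isOpen_Ioi x hx0) ?_
    · rw [huIcc, uIcc_of_le hx.1]; exact Icc_subset_Icc le_rfl hx.2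
    · exact Real.continuousAt_rpow_const x (-α) (Or.inl hx0.ne')
  have hcontG : ContinuousOn G (Icc y ε) := fun x hx =>
    (hderivG x hx).continuousAt.continuousWithinAt
  -- continuity of F
  have hcontF : ContinuousOn F (Icc y ε) := by
    rw [← huIcc]
    exact intervalIntegral.continuousOn_primitive_interval' hint_h left_mem_uIcc
  -- the comparison function and its derivative
  set Φ : ℝ → ℝ := fun x => -Real.exp (-(s * G x)) / s with hΦ
  have hderivΦ : ∀ x ∈ Icc y ε, HasDerivAt Φ (x ^ (-α) * Real.exp (-(s * G x))) x := by
    intro x hx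
    have := ((((hderivG x hx).const_mul s).neg).exp).neg.div_const s
    convert this using 1
    show x ^ (-α) * Real.exp (-(s * G x)) = -(Real.exp (-(s * G x)) * -(s * x ^ (-α))) / s
    field_simp
    all_goals rfl
  have hintΦ' : IntervalIntegrable (fun x => x ^ (-α) * Real.exp (-(s * G x))) volume y ε := by
    apply ContinuousOn.intervalIntegrable
    rw [huIcc]
    exact hcontpow.mul (Real.continuous_exp.comp_continuousOn
      ((continuousOn_const.mul hcontG).neg))
  have hftc : ∫ x in y..ε, x ^ (-α) * Real.exp (-(s * G x)) = Φ ε - Φ y := by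
    apply intervalIntegral.integral_eq_sub_of_hasDerivAt
    · intro x hx; rw [huIcc] at hx; exact hderivΦ x hx
    · exact hintΦ'
  -- integrability of the left-hand side
  have hintL : IntervalIntegrable (fun x => x ^ β * Real.exp (-(s * F x))) volume y ε := by
    apply ContinuousOn.intervalIntegrable
    rw [huIcc]
    refine ContinuousOn.mul (fun x hx =>
      (Real.continuousAt_rpow_const x β (Or.inl (hsub hx).1.ne')).continuousWithinAt) ?_
    exact Real.continuous_exp.comp_continuousOn ((continuousOn_const.mul hcontF).neg)
  have hαβ : (0:ℝ) < α + β := by linarith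
  -- pointwise comparison
  have hcomp : ∀ x ∈ Icc y ε, x ^ β * Real.exp (-(s * F x)) ≤
      ε ^ (α + β) * (x ^ (-α) * Real.exp (-(s * G x))) := by
    intro x hx
    have hx0 : (0:ℝ) < x := (hsub hx).1
    have h1 : Real.exp (-(s * F x)) ≤ Real.exp (-(s * G x)) := by
      apply Real.exp_le_exp.2
      have := hFG x hx
      nlinarith
    have hxb : (0:ℝ) ≤ x ^ β := Real.rpow_nonneg hx0.le β
    calc x ^ β * Real.exp (-(s * F x)) ≤ x ^ β * Real.exp (-(s * G x)) :=
          mul_le_mul_of_nonneg_left h1 hxb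
      _ = x ^ (α + β) * (x ^ (-α) * Real.exp (-(s * G x))) := by
          rw [← mul_assoc, ← Real.rpow_add hx0]
          ring_nf
      _ ≤ ε ^ (α + β) * (x ^ (-α) * Real.exp (-(s * G x))) := by
          apply mul_le_mul_of_nonneg_right (Real.rpow_le_rpow hx0.le hx.2 hαβ.le)
          exact mul_nonneg (Real.rpow_nonneg hx0.le _) (Real.exp_nonneg _)
  -- put everything together
  have hmain : ∫ x in y..ε, x ^ β * Real.exp (-(s * F x)) ≤
      ε ^ (α + β) * ∫ x in y..ε, x ^ (-α) * Real.exp (-(s * G x)) := by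
    rw [← intervalIntegral.integral_const_mul]
    exact intervalIntegral.integral_mono_on hyle hintL (hintΦ'.const_mul _) hcomp
  have hGy : G y = 0 := intervalIntegral.integral_same
  have hΦbound : Φ ε - Φ y ≤ 1 / s := by
    rw [hΦ]
    simp only [hGy, mul_zero, neg_zero, Real.exp_zero]
    rw [div_sub_div_same, div_le_div_iff₀ hs hs]
    have := Real.exp_nonneg (-(s * G ε))
    nlinarith
  calc ∫ x in y..ε, x ^ β * Real.exp (-(s * F x)) ≤
      ε ^ (α + β) * ∫ x in y..ε, x ^ (-α) * Real.exp (-(s * G x)) := hmain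
    _ = ε ^ (α + β) * (Φ ε - Φ y) := by rw [hftc]
    _ ≤ ε ^ (α + β) * (1 / s) :=
        mul_le_mul_of_nonneg_left hΦbound (Real.rpow_nonneg hε.le _)
    _ = ε ^ (α + β) / s := by ring
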